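/- If μ(w) contains a subword u with period p such that |u|/p > 2, then w contains a subword v of length ⌈|u|/2⌉ with period p/2. (In particular p is even.) -/

import Mathlib

/-- The Thue-Morse morphism: μ(0)=01, μ(1)=10, with 0 = `false`, 1 = `true`. -/
def mu (w : List Bool) : List Bool := w.flatMap fun b => [b, !b]

/-- `u` has period `p`: u(i) = u(i+p) for all valid indices. -/
def HasPeriod (u : List Bool) (p : ℕ) : Prop :=
  ∀ i, i + p < u.length → u.getD i false = u.getD (i + p) false

lemma mu_cons (b : Bool) (w : List Bool) : mu (b :: w) = b :: (!b) :: mu w := rfl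

lemma mu_length (w : List Bool) : (mu w).length = 2 * w.length := by
  induction w with
  | nil => rfl
  | cons b w ih => simp [mu_cons, ih]; omega

lemma mu_getD_even (w : List Bool) (j : ℕ) :
    (mu w).getD (2 * j) false = w.getD j false := by
  induction w generalizing j with
  | nil => rfl
  | cons b w ih =>
    cases j with
    | zero => rfl
    | succ j =>
      have h2 : 2 * (j + 1) = (2 * j) + 1 + 1 := by ring
      rw [h2, mu_cons]
      simpa using ih j

lemma mu_getD_odd (w : List Bool) (j : ℕ) (hj : j < w.length) :
    (mu w).getD (2 * j + 1) false = !(w.getD j false) := by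
  induction w generalizing j with
  | nil => simp at hj
  | cons b w ih =>
    cases j with
    | zero => rfl
    | succ j =>
      have h2 : 2 * (j + 1) + 1 = (2 * j + 1) + 1 + 1 := by ring
      rw [h2, mu_cons]
      simp only [List.getD_cons_succ]
      exact ih j (by simpa using Nat.lt_of_succ_lt_succ hj)

lemma getD_take_drop (l : List Bool) (a L t : ℕ) (h : t < L) :
    ((l.drop a).take L).getD t false = l.getD (a + t) false := by
  rw [List.getD_eq_getElem?_getD, List.getD_eq_getElem?_getD, List.getElem?_take,
    if_pos h, List.getElem?_drop]

theorem stronger (w u : List Bool) (p : ℕ) (hp : 1 ≤ p)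
    (hsub : u <:+: mu w) (hper : HasPeriod u p) (hlen : 2 * p < u.length) :
    2 ∣ p ∧ ∃ v, v <:+: w ∧ v.length = (u.length + 1) / 2 ∧ HasPeriod v (p / 2) := by
  obtain ⟨t, r, heq⟩ := hsub
  set s := t.length with hsdef
  have hwlen : s + u.length + r.length = 2 * w.length := by
    have h := congrArg List.length heq
    simp [mu_length] at h
    omega
  have hu : ∀ i, i < u.length → u.getD i false = (mu w).getD (s + i) false := by
    intro i hi
    rw [← heq, List.append_assoc,
      List.getD_append_right t (u ++ r) false (s + i) (Nat.le_add_right s i),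
      Nat.add_sub_cancel_left, List.getD_append _ _ _ _ hi]
  have pair : ∀ i, (s + i) % 2 = 0 → i + 1 < u.length →
      u.getD (i + 1) false = !(u.getD i false) := by
    intro i hpar hi1
    have hi : i < u.length := by omega
    obtain ⟨j, hj⟩ : ∃ j, s + i = 2 * j := ⟨(s + i) / 2, by omega⟩
    have hjw : j < w.length := by omega
    rw [hu i hi, hu (i + 1) hi1, show s + (i + 1) = 2 * j + 1 by omega, hj,
      mu_getD_odd w j hjw, mu_getD_even]
  have hpe : p % 2 = 0 := by
    by_contra hodd
    have hodd : p % 2 = 1 := by omega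
    rcases Nat.mod_two_eq_zero_or_one s with hs | hs
    · -- s even
      have chain : ∀ k, 2 * k + 1 ≤ p → u.getD (2 * k) false = u.getD 0 false := by
        intro k
        induction k with
        | zero => intro _; rfl
        | succ k ih =>
          intro hk
          have h1 : u.getD (2 * k + 2) false = u.getD (2 * k + 2 + p) false := by
            have := hper (2 * k + 2) (by omega)
            simpa using this
          have h2 : u.getD (2 * k + 2 + p) false = !(u.getD (2 * k + 1 + p) false) := by
            have := pair (2 * k + 1 + p) (by omega) (by omega)
            simpa [show 2 * k + 1 + p + 1 = 2 * k + 2 + p by omega] using this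
          have h3 : u.getD (2 * k + 1) false = u.getD (2 * k + 1 + p) false := by
            have := hper (2 * k + 1) (by omega)
            simpa using this
          have h4 : u.getD (2 * k + 1) false = !(u.getD (2 * k) false) := by
            have := pair (2 * k) (by omega) (by omega)
            simpa using this
          have h5 : u.getD (2 * (k + 1)) false = u.getD (2 * k) false := by
            rw [show 2 * (k + 1) = 2 * k + 2 by ring, h1, h2, ← h3, h4, Bool.not_not]
          rw [h5]
          exact ih (by omega)
      have e1 : u.getD 0 false = u.getD p false := by
        have := hper 0 (by omega); simpa using this
      have e2 : u.getD p false = !(u.getD (p - 1) false) := by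
        have := pair (p - 1) (by omega) (by omega)
        simpa [show p - 1 + 1 = p by omega] using this
      have e3 : u.getD (p - 1) false = u.getD 0 false := by
        have := chain ((p - 1) / 2) (by omega)
        simpa [show 2 * ((p - 1) / 2) = p - 1 by omega] using this
      have : u.getD 0 false = !(u.getD 0 false) :=
        (e1.trans e2).trans (congrArg (fun b => !b) e3)
      simp at this
    · -- s odd
      have chain : ∀ k, 2 * k + 1 ≤ p → u.getD (2 * k + 1) false = u.getD 1 false := by
        intro k
        induction k with
        | zero => intro _; rfl
        | succ k ih =>
          intro hk
          have h1 : u.getD (2 * k + 3) false = u.getD (2 * k + 3 + p) false := by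
            have := hper (2 * k + 3) (by omega)
            simpa using this
          have h2 : u.getD (2 * k + 3 + p) false = !(u.getD (2 * k + 2 + p) false) := by
            have := pair (2 * k + 2 + p) (by omega) (by omega)
            simpa [show 2 * k + 2 + p + 1 = 2 * k + 3 + p by omega] using this
          have h3 : u.getD (2 * k + 2) false = u.getD (2 * k + 2 + p) false := by
            have := hper (2 * k + 2) (by omega)
            simpa using this
          have h4 : u.getD (2 * k + 2) false = !(u.getD (2 * k + 1) false) := by
            have := pair (2 * k + 1) (by omega) (by omega)
            simpa using this
          have h5 : u.getD (2 * (k + 1) + 1) false = u.getD (2 * k + 1) false := by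
            rw [show 2 * (k + 1) + 1 = 2 * k + 3 by ring, h1, h2, ← h3, h4, Bool.not_not]
          rw [h5]
          exact ih (by omega)
      have e1 : u.getD 1 false = u.getD (1 + p) false := hper 1 (by omega)
      have e2 : u.getD (1 + p) false = !(u.getD p false) := by
        have := pair p (by omega) (by omega)
        simpa [show p + 1 = 1 + p by omega] using this
      have e3 : u.getD p false = u.getD 1 false := by
        have := chain ((p - 1) / 2) (by omega)
        simpa [show 2 * ((p - 1) / 2) + 1 = p by omega] using this
      have : u.getD 1 false = !(u.getD 1 false) :=
        (e1.trans e2).trans (congrArg (fun b => !b) e3)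
      simp at this
  refine ⟨Nat.dvd_of_mod_eq_zero hpe, ?_⟩
  obtain ⟨a, ha⟩ : ∃ a, a = s / 2 := ⟨_, rfl⟩
  obtain ⟨L, hL⟩ : ∃ L, L = (u.length + 1) / 2 := ⟨_, rfl⟩
  obtain ⟨q, hq⟩ : ∃ q, q = p / 2 := ⟨_, rfl⟩
  have haL : a + L ≤ w.length := by omega
  refine ⟨(w.drop a).take L,
    (List.take_prefix L (w.drop a)).isInfix.trans (List.drop_suffix a w).isInfix, ?_, ?_⟩
  · rw [List.length_take, List.length_drop]; omega
  · intro i hi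
    have hlv : ((w.drop a).take L).length = L := by
      rw [List.length_take, List.length_drop]; omega
    rw [hlv] at hi
    rw [← hq] at hi ⊢
    rw [getD_take_drop _ _ _ _ (by omega), getD_take_drop _ _ _ _ (by omega)]
    rcases Nat.mod_two_eq_zero_or_one s with hs | hs
    · have hw : ∀ t, 2 * t < u.length → w.getD (a + t) false = u.getD (2 * t) false := by
        intro t ht
        rw [hu (2 * t) ht, show s + 2 * t = 2 * (a + t) by omega, mu_getD_even]
      rw [hw i (by omega), hw (i + q) (by omega), show 2 * (i + q) = 2 * i + p by omega]
      exact hper (2 * i) (by omega)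
    · have hw : ∀ t, 2 * t < u.length → w.getD (a + t) false = !(u.getD (2 * t) false) := by
        intro t ht
        have hjw : a + t < w.length := by omega
        rw [hu (2 * t) ht, show s + 2 * t = 2 * (a + t) + 1 by omega,
          mu_getD_odd w (a + t) hjw, Bool.not_not]
      rw [hw i (by omega), hw (i + q) (by omega), show 2 * (i + q) = 2 * i + p by omega]
      exact congrArg (!·) (hper (2 * i) (by omega))
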